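/- Let σ be a primitive pseudo-unimodular substitution over a finite alphabet whose incidence matrix has Perron eigenvalue β that is not a Pisot number, and suppose (as given by Theorem on eigenvalues) that every eigenvalue e^{2iπα} of the subshift satisfies α = w·v_β for some integer row vector w, where v_β is the Perron eigenvector normalized to have coordinate sum 1. Then the set of such α is contained in a ℚ-vector subspace of ℚ(β) of dimension strictly less than deg(β); in particular β itself is not of the form w·v_β with the fixed-point property below. -/

import Mathlib

set_option maxHeartbeats 1000000
set_option synthInstance.maxHeartbeats 200000

open IntermediateField Polynomial


open scoped Classical in
/-- A square integer matrix is pseudo-unimodular if the product of its non-zero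
complex eigenvalues, counted with algebraic multiplicity, equals `±1`. -/
def PseudoUnimodular {A : Type*} [Fintype A] [DecidableEq A] (M : Matrix A A ℤ) : Prop :=
  ((M.map (fun x : ℤ => (x : ℂ))).charpoly.roots.filter (fun z => z ≠ 0)).prod = 1 ∨
  ((M.map (fun x : ℤ => (x : ℂ))).charpoly.roots.filter (fun z => z ≠ 0)).prod = -1

/-- A real number is a Pisot number if it is an algebraic integer `> 1` all of whose
other complex conjugates have modulus `< 1`. -/
def IsPisot (β : ℝ) : Prop :=
  1 < β ∧ IsIntegral ℤ β ∧
    ∀ γ : ℂ, Polynomial.aeval γ (minpoly ℚ β) = 0 → γ ≠ (β : ℂ) → ‖γ‖ < 1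

theorem stmt_13 {A : Type*} [Fintype A] [DecidableEq A] (M : Matrix A A ℤ)
    (hprim : ∃ n : ℕ, ∀ i j, 0 < (M ^ n) i j)
    (hpu : PseudoUnimodular M)
    (β : ℝ) (hβ1 : 1 < β)
    (hβeig : ∃ v : A → ℂ, (M.map (fun x : ℤ => (x : ℂ))).mulVec v = (β : ℂ) • v ∧ ∑ a, v a = 1)
    (hnp : ¬ IsPisot β) :
    ∃ W : Submodule ℚ ℝ,
      W ≤ Subalgebra.toSubmodule (Algebra.adjoin ℚ {β}) ∧
      Module.finrank ℚ W < (minpoly ℚ β).natDegree ∧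
      β ∉ W ∧
      ∀ α : ℝ,
        (∃ w : A → ℤ, ∀ (δ : ℂ) (v : A → ℂ), 1 ≤ ‖δ‖ →
          (M.map (fun x : ℤ => (x : ℂ))).mulVec v = δ • v → ∑ a, v a = 1 →
          ∑ a, (w a : ℂ) * v a = (α : ℂ)) → α ∈ W := by
  classical
  obtain ⟨v, hveq, hvsum⟩ := hβeig
  set Mc : Matrix A A ℂ := M.map (fun x : ℤ => (x : ℂ)) with hMc
  -- β is an algebraic integer
  have hintZ : IsIntegral ℤ β := by
    have hv0 : v ≠ 0 := fun h => by simp [h] at hvsum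
    have hdet : ((β : ℂ) • (1 : Matrix A A ℂ) - Mc).det = 0 := by
      rw [← Matrix.exists_mulVec_eq_zero_iff]
      refine ⟨v, hv0, ?_⟩
      rw [Matrix.sub_mulVec, Matrix.smul_mulVec, Matrix.one_mulVec, hveq, sub_self]
    have hcp : (Mc.charpoly).eval (β : ℂ) = 0 := by
      rw [Matrix.charpoly, _root_.eval_det, Matrix.matPolyEquiv_charmatrix]
      simpa [Matrix.scalar_apply, Matrix.smul_eq_diagonal_mul] using hdet
    have hic : IsIntegral ℤ ((β : ℝ) : ℂ) := by
      refine ⟨M.charpoly, M.charpoly_monic, ?_⟩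
      rw [← Polynomial.aeval_def, Polynomial.aeval_def, ← Polynomial.eval_map,
        ← Matrix.charpoly_map]
      exact hcp
    exact (isIntegral_algHom_iff (Complex.ofRealHom.toIntAlgHom) Complex.ofReal_injective).mp hic
  have hintQ : IsIntegral ℚ β := hintZ.tower_top
  -- a conjugate γ of β with |γ| ≥ 1
  obtain ⟨γ, hγroot, hγne, hγnorm⟩ :
      ∃ γ : ℂ, Polynomial.aeval γ (minpoly ℚ β) = 0 ∧ γ ≠ (β : ℂ) ∧ 1 ≤ ‖γ‖ := by
    by_contra h
    push_neg at h
    exact hnp ⟨hβ1, hintZ, fun γ h1 h2 => lt_of_not_ge (fun hle => (h γ h1 h2).not_ge hle)⟩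
  -- the field K = ℚ(β)
  set K : IntermediateField ℚ ℝ := ℚ⟮β⟯ with hK
  haveI : FiniteDimensional ℚ K := IntermediateField.adjoin.finiteDimensional hintQ
  set gen : K := IntermediateField.AdjoinSimple.gen ℚ β with hgen
  -- the embedding ψ : K → ℂ sending β to γ
  have hγar : γ ∈ (minpoly ℚ β).aroots ℂ := by
    rw [Polynomial.mem_aroots]
    exact ⟨minpoly.ne_zero hintQ, hγroot⟩
  set ψ : K →ₐ[ℚ] ℂ := (IntermediateField.algHomAdjoinIntegralEquiv ℚ hintQ).symm ⟨γ, hγar⟩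
    with hψ
  have hψgen : ψ gen = γ :=
    IntermediateField.algHomAdjoinIntegralEquiv_symm_apply_gen ℚ hintQ ⟨γ, hγar⟩
  -- the canonical embedding K → ℂ
  set ι2 : K →ₗ[ℚ] ℂ :=
    (((Complex.ofRealAm.restrictScalars ℚ).comp K.val).toLinearMap) with hι2
  have hι2app : ∀ x : K, ι2 x = ((x : ℝ) : ℂ) := fun x => rfl
  set W0 : Submodule ℚ K := LinearMap.ker (ψ.toLinearMap - ι2) with hW0
  have hmemW0 : ∀ x : K, x ∈ W0 ↔ ψ x = ((x : ℝ) : ℂ) := by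
    intro x
    rw [hW0, LinearMap.mem_ker, LinearMap.sub_apply, sub_eq_zero]
    exact Iff.rfl
  have hgenW0 : gen ∉ W0 := by
    rw [hmemW0]
    have : ((gen : ℝ) : ℂ) = (β : ℂ) := by
      rw [hgen]; norm_cast
    rw [hψgen, this]
    exact hγne
  refine ⟨W0.map K.val.toLinearMap, ?_, ?_, ?_, ?_⟩
  · rintro _ ⟨x, -, rfl⟩
    have : (Algebra.adjoin ℚ {β}) = K.toSubalgebra :=
      (IntermediateField.adjoin_simple_toSubalgebra_of_isAlgebraic hintQ.isAlgebraic).symm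
    show (x : ℝ) ∈ (Algebra.adjoin ℚ {β})
    rw [this]
    exact x.2
  · have h1 : Module.finrank ℚ (W0.map K.val.toLinearMap) = Module.finrank ℚ W0 :=
      (LinearEquiv.finrank_eq
        (Submodule.equivMapOfInjective K.val.toLinearMap
          (by exact Subtype.val_injective) W0)).symm
    rw [h1, ← IntermediateField.adjoin.finrank hintQ]
    exact Submodule.finrank_lt (s := W0) (fun h => hgenW0 (h ▸ Submodule.mem_top))
  · rintro ⟨x, hx, hxval⟩
    apply hgenW0
    have : x = gen := by
      apply Subtype.ext
      exact hxval
    rwa [this] at hx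
  · rintro α ⟨w, hw⟩
    -- a K-linear functional ℓ : ℂ → K with ℓ 1 = 1
    obtain ⟨g, hg⟩ := LinearMap.exists_extend
      (((LinearEquiv.toSpanNonzeroSingleton K ℂ 1 one_ne_zero).symm :
        (K ∙ (1 : ℂ)) ≃ₗ[K] K) : (K ∙ (1 : ℂ)) →ₗ[K] K)
    have hg1 : g 1 = 1 := by
      have h1m : (1 : ℂ) ∈ (K ∙ (1 : ℂ)) := Submodule.mem_span_singleton_self 1
      have := congrArg (fun f : (K ∙ (1 : ℂ)) →ₗ[K] K => f ⟨1, h1m⟩) hg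
      simp only [LinearMap.comp_apply, Submodule.subtype_apply] at this
      rw [this]
      rw [LinearEquiv.coe_coe, LinearEquiv.symm_apply_eq,
        LinearEquiv.toSpanNonzeroSingleton_one]
    set u : A → K := fun a => g (v a) with hu
    have husum : ∑ a, u a = 1 := by
      rw [hu]
      simp only [← map_sum, hvsum, hg1]
    -- the eigen-equation over K
    have hueq : ∀ a, ∑ b, (M a b : K) * u b = gen * u a := by
      intro a
      have hva : ∑ b, (M a b : ℂ) * v b = (β : ℂ) * v a := by
        have := congrFun hveq a
        simpa [Matrix.mulVec, dotProduct, hMc, Matrix.map_apply] using this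
      have hsmul : (β : ℂ) * v a = gen • v a := by
        rw [Algebra.smul_def]
        have : (algebraMap K ℂ) gen = ((gen : ℝ) : ℂ) := rfl
        rw [this, hgen]
        norm_cast
      have := congrArg g hva
      rw [hsmul, map_smul, smul_eq_mul] at this
      rw [← this, map_sum]
      refine Finset.sum_congr rfl (fun b _ => ?_)
      rw [show (M a b : ℂ) * v b = (M a b : ℤ) • v b by rw [zsmul_eq_mul],
        map_zsmul, zsmul_eq_mul]
    -- for any ring hom χ : K →+* ℂ we get an eigenvector
    have key : ∀ (χ : K →+* ℂ),
        Mc.mulVec (fun a => χ (u a)) = (χ gen) • (fun a => χ (u a)) ∧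
        ∑ a, χ (u a) = 1 := by
      intro χ
      constructor
      · funext a
        have := congrArg χ (hueq a)
        rw [map_sum, map_mul] at this
        simp only [map_mul, map_intCast] at this
        simpa [Matrix.mulVec, dotProduct, hMc, Matrix.map_apply] using this
      · rw [← map_sum, husum, map_one]
    -- first application: the real embedding
    set χ1 : K →+* ℂ := (algebraMap K ℂ) with hχ1
    have hχ1app : ∀ x : K, χ1 x = ((x : ℝ) : ℂ) := fun x => rfl
    have hχ1gen : χ1 gen = (β : ℂ) := by rw [hχ1app, hgen]; norm_cast
    have hβnorm : (1 : ℝ) ≤ ‖((β : ℝ) : ℂ)‖ := by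
      rw [Complex.norm_real]
      rw [Real.norm_eq_abs, abs_of_pos (lt_trans one_pos hβ1)]
      exact le_of_lt hβ1
    have h1 := hw (β : ℂ) (fun a => χ1 (u a)) hβnorm (by rw [← hχ1gen]; exact (key χ1).1)
      (key χ1).2
    -- second application: ψ
    set χ2 : K →+* ℂ := ψ.toRingHom with hχ2
    have hχ2gen : χ2 gen = γ := hψgen
    have h2 := hw γ (fun a => χ2 (u a)) hγnorm (by rw [← hχ2gen]; exact (key χ2).1)
      (key χ2).2
    -- the element x = ∑ w a • u a
    set x : K := ∑ a, (w a : K) * u a with hx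
    have hχx : ∀ χ : K →+* ℂ, χ x = ∑ a, (w a : ℂ) * χ (u a) := by
      intro χ
      rw [hx, map_sum]
      congr 1
      ext a
      rw [map_mul, map_intCast]
    have hxreal : ((x : ℝ) : ℂ) = (α : ℂ) := by
      rw [← hχ1app, hχx, h1]
    have hxα : (x : ℝ) = α := by exact_mod_cast hxreal
    have hxW0 : x ∈ W0 := by
      rw [hmemW0]
      show χ2 x = ((x : ℝ) : ℂ)
      rw [hχx, hxreal]
      simpa using h2
    exact ⟨x, hxW0, hxα⟩
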